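/- Let k : (0, ∞) → ℝ be measurable, and assume there exist δ > 0, γ > 0, and C > 0 such that s k′(s) ≤ −γ for all 0 < s ≤ δ and |s k′(s)| ≤ C s² for all s ≥ δ, where k′ is the derivative of k. Let f ∈ L¹(ℝⁿ) be nonnegative with M = ∫_{ℝⁿ} f(x) dx and I = ∫_{ℝⁿ} |x|² f(x) dx < ∞. Then ∫∫_{ℝⁿ×ℝⁿ} f(x) f(y) |x − y| k′(|x − y|) dx dy ≤ −γ M² + 4(C + γ/δ²) M I. -/

import Mathlib

open MeasureTheory Real Set
open scoped ENNReal

noncomputable section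

/-- **The key moment estimate.**  Let `k` be such that `s k′(s) ≤ -γ` for `0 < s ≤ δ` and
`|s k′(s)| ≤ C s²` for `s ≥ δ`, with `δ, γ, C > 0`.  Let `f ∈ L¹(ℝⁿ)` be nonnegative with
mass `M = ∫ f` and finite second moment `I = ∫ |x|² f`.  Then
`∬ f(x) f(y) |x-y| k′(|x-y|) dx dy ≤ -γ M² + 4(C + γ/δ²) M I`. -/
theorem moment_double_integral_estimate (n : ℕ) (hn : 1 ≤ n) (k : ℝ → ℝ)
    (δ γ C : ℝ) (hδ : 0 < δ) (hγ : 0 < γ) (hC : 0 < C)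
    (hsmall : ∀ s : ℝ, 0 < s → s ≤ δ → s * deriv k s ≤ -γ)
    (hlarge : ∀ s : ℝ, δ ≤ s → |s * deriv k s| ≤ C * s ^ 2)
    (f : EuclideanSpace ℝ (Fin n) → ℝ) (hf : Integrable f volume)
    (hfpos : 0 ≤ᵐ[volume] f)
    (hmom : Integrable (fun x => ‖x‖ ^ 2 * f x) volume)
    (hint : Integrable (fun p : EuclideanSpace ℝ (Fin n) × EuclideanSpace ℝ (Fin n) =>
        f p.1 * f p.2 * (‖p.1 - p.2‖ * deriv k ‖p.1 - p.2‖)) (volume.prod volume)) :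
    (∫ p : EuclideanSpace ℝ (Fin n) × EuclideanSpace ℝ (Fin n),
        f p.1 * f p.2 * (‖p.1 - p.2‖ * deriv k ‖p.1 - p.2‖) ∂(volume.prod volume)) ≤
      -γ * (∫ x, f x) ^ 2 +
        4 * (C + γ / δ ^ 2) * (∫ x, f x) * ∫ x, ‖x‖ ^ 2 * f x := by
  haveI : Nonempty (Fin n) := ⟨⟨0, hn⟩⟩
  haveI : Nontrivial (EuclideanSpace ℝ (Fin n)) := (WithLp.equiv 2 (Fin n → ℝ)).nontrivial
  set c : ℝ := C + γ / δ ^ 2 with hc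
  have hc0 : 0 < c := by rw [hc]; positivity
  have hfpos' : ∀ᵐ x ∂(volume : Measure (EuclideanSpace ℝ (Fin n))), 0 ≤ f x := by
    filter_upwards [hfpos] with x hx using hx
  have h1 : ∀ᵐ p : EuclideanSpace ℝ (Fin n) × EuclideanSpace ℝ (Fin n)
      ∂(volume.prod volume), 0 ≤ f p.1 :=
    Measure.quasiMeasurePreserving_fst.ae hfpos'
  have h2 : ∀ᵐ p : EuclideanSpace ℝ (Fin n) × EuclideanSpace ℝ (Fin n)
      ∂(volume.prod volume), 0 ≤ f p.2 :=
    Measure.quasiMeasurePreserving_snd.ae hfpos'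
  have hdiag : (volume.prod volume :
      Measure (EuclideanSpace ℝ (Fin n) × EuclideanSpace ℝ (Fin n))) {p | p.1 = p.2} = 0 := by
    have hmeas : MeasurableSet {p : EuclideanSpace ℝ (Fin n) × EuclideanSpace ℝ (Fin n) |
        p.1 = p.2} := measurableSet_eq_fun measurable_fst measurable_snd
    rw [Measure.prod_apply hmeas]
    have : ∀ x : EuclideanSpace ℝ (Fin n),
        (volume (Prod.mk x ⁻¹' {p : EuclideanSpace ℝ (Fin n) × EuclideanSpace ℝ (Fin n) |
          p.1 = p.2})) = 0 := by
      intro x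
      have : Prod.mk x ⁻¹' {p : EuclideanSpace ℝ (Fin n) × EuclideanSpace ℝ (Fin n) |
          p.1 = p.2} = {x} := by
        ext y; simp [eq_comm]
      rw [this]
      exact measure_singleton x
    simp [this]
  have h3 : ∀ᵐ p : EuclideanSpace ℝ (Fin n) × EuclideanSpace ℝ (Fin n)
      ∂(volume.prod volume), p.1 ≠ p.2 := by
    rw [ae_iff]
    simpa using hdiag
  -- pointwise estimate
  have hae : ∀ᵐ p : EuclideanSpace ℝ (Fin n) × EuclideanSpace ℝ (Fin n) ∂(volume.prod volume),
      f p.1 * f p.2 * (‖p.1 - p.2‖ * deriv k ‖p.1 - p.2‖) ≤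
        f p.1 * f p.2 * (-γ + 2 * c * (‖p.1‖ ^ 2 + ‖p.2‖ ^ 2)) := by
    filter_upwards [h1, h2, h3] with p hx hy hxy
    apply mul_le_mul_of_nonneg_left _ (mul_nonneg hx hy)
    set s := ‖p.1 - p.2‖ with hs
    have hspos : 0 < s := by
      rw [hs]
      exact norm_sub_pos_iff.mpr hxy
    have hkey : s * deriv k s ≤ -γ + c * s ^ 2 := by
      rcases le_total s δ with h | h
      · have h0 := hsmall s hspos h
        nlinarith [mul_pos hc0 (mul_pos hspos hspos)]
      · have h4 : s * deriv k s ≤ C * s ^ 2 := (le_abs_self _).trans (hlarge s h)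
        have h5 : δ ^ 2 ≤ s ^ 2 := by nlinarith
        have h6 : γ ≤ γ / δ ^ 2 * s ^ 2 := by
          rw [div_mul_eq_mul_div, le_div_iff₀ (by positivity)]
          nlinarith
        rw [hc]; nlinarith
    have hnorm : s ≤ ‖p.1‖ + ‖p.2‖ := by
      rw [hs]; exact norm_sub_le _ _
    have h7 : s ^ 2 ≤ 2 * (‖p.1‖ ^ 2 + ‖p.2‖ ^ 2) := by
      nlinarith [sq_nonneg (‖p.1‖ - ‖p.2‖), hspos]
    nlinarith
  -- integrability of the majorant
  have hg1 : Integrable (fun p : EuclideanSpace ℝ (Fin n) × EuclideanSpace ℝ (Fin n) =>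
      f p.1 * f p.2) (volume.prod volume) := hf.mul_prod hf
  have hg2 : Integrable (fun p : EuclideanSpace ℝ (Fin n) × EuclideanSpace ℝ (Fin n) =>
      (‖p.1‖ ^ 2 * f p.1) * f p.2) (volume.prod volume) := hmom.mul_prod hf
  have hg3 : Integrable (fun p : EuclideanSpace ℝ (Fin n) × EuclideanSpace ℝ (Fin n) =>
      f p.1 * (‖p.2‖ ^ 2 * f p.2)) (volume.prod volume) := hf.mul_prod hmom
  have hA : Integrable (fun p : EuclideanSpace ℝ (Fin n) × EuclideanSpace ℝ (Fin n) =>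
      -γ * (f p.1 * f p.2)) (volume.prod volume) := hg1.const_mul (-γ)
  have hB : Integrable (fun p : EuclideanSpace ℝ (Fin n) × EuclideanSpace ℝ (Fin n) =>
      2 * c * ((‖p.1‖ ^ 2 * f p.1) * f p.2 + f p.1 * (‖p.2‖ ^ 2 * f p.2)))
      (volume.prod volume) := (hg2.add hg3).const_mul (2 * c)
  have hg : Integrable
      (fun p : EuclideanSpace ℝ (Fin n) × EuclideanSpace ℝ (Fin n) =>
        f p.1 * f p.2 * (-γ + 2 * c * (‖p.1‖ ^ 2 + ‖p.2‖ ^ 2)))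
      (volume.prod volume) :=
    (hA.add hB).congr (Filter.Eventually.of_forall fun p => by simp only [Pi.add_apply]; ring)
  -- compute the integral of the majorant
  have hval : (∫ p : EuclideanSpace ℝ (Fin n) × EuclideanSpace ℝ (Fin n),
        f p.1 * f p.2 * (-γ + 2 * c * (‖p.1‖ ^ 2 + ‖p.2‖ ^ 2)) ∂(volume.prod volume)) =
      -γ * (∫ x, f x) ^ 2 + 4 * c * (∫ x, f x) * ∫ x, ‖x‖ ^ 2 * f x := by
    have heq : (fun p : EuclideanSpace ℝ (Fin n) × EuclideanSpace ℝ (Fin n) =>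
        f p.1 * f p.2 * (-γ + 2 * c * (‖p.1‖ ^ 2 + ‖p.2‖ ^ 2))) =
        fun p : EuclideanSpace ℝ (Fin n) × EuclideanSpace ℝ (Fin n) =>
          -γ * (f p.1 * f p.2) +
            2 * c * ((‖p.1‖ ^ 2 * f p.1) * f p.2 + f p.1 * (‖p.2‖ ^ 2 * f p.2)) := by
      funext p; ring
    rw [heq, integral_add hA hB, integral_const_mul, integral_const_mul, integral_add hg2 hg3,
      integral_prod_mul f f,
      integral_prod_mul (fun x : EuclideanSpace ℝ (Fin n) => ‖x‖ ^ 2 * f x) f,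
      integral_prod_mul f (fun x : EuclideanSpace ℝ (Fin n) => ‖x‖ ^ 2 * f x)]
    ring
  calc (∫ p : EuclideanSpace ℝ (Fin n) × EuclideanSpace ℝ (Fin n),
        f p.1 * f p.2 * (‖p.1 - p.2‖ * deriv k ‖p.1 - p.2‖) ∂(volume.prod volume)) ≤
      ∫ p : EuclideanSpace ℝ (Fin n) × EuclideanSpace ℝ (Fin n),
        f p.1 * f p.2 * (-γ + 2 * c * (‖p.1‖ ^ 2 + ‖p.2‖ ^ 2)) ∂(volume.prod volume) :=
      integral_mono_ae hint hg hae
    _ = -γ * (∫ x, f x) ^ 2 + 4 * c * (∫ x, f x) * ∫ x, ‖x‖ ^ 2 * f x := hval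

end
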